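/- Let a_n ≥ 0 be a sequence with 0 ≤ a_n ≤ 2k(2k−1)^{n−1} (k ≥ 2 an integer) such that lim_{n→∞} (1/2)(a_{n−1}/(2k(2k−1)^{n−2}) + a_n/(2k(2k−1)^{n−1})) = δ. Then liminf_{n→∞} (a_1 + ⋯ + a_n)/((k/(k−1))(2k−1)^n) ≥ (4k−4)/(2k−1)² · δ. -/

import Mathlib

open Filter

theorem liminf_partial_sums_of_annular (k : ℕ) (hk : 2 ≤ k) (a : ℕ → ℝ) (δ : ℝ)
    (hnonneg : ∀ n, 0 ≤ a n)
    (hupper : ∀ n : ℕ, 1 ≤ n → a n ≤ 2 * k * (2 * k - 1 : ℝ) ^ (n - 1))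
    (hann : Tendsto (fun n : ℕ =>
        (1 / 2) * (a (n - 1) / (2 * k * (2 * k - 1 : ℝ) ^ (n - 2)) +
          a n / (2 * k * (2 * k - 1 : ℝ) ^ (n - 1))))
      atTop (nhds δ)) :
    ((4 * k - 4 : ℝ) / (2 * k - 1) ^ 2) * δ ≤
      Filter.liminf (fun n : ℕ =>
        (∑ i ∈ Finset.Icc 1 n, a i) / (((k : ℝ) / (k - 1)) * (2 * k - 1) ^ n)) atTop := by
  have hK : (2:ℝ) ≤ (k:ℝ) := by exact_mod_cast hk
  have hqpos : (0:ℝ) < 2*(k:ℝ) - 1 := by linarith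
  set c : ℕ → ℝ := fun n : ℕ =>
        (1 / 2) * (a (n - 1) / (2 * k * (2 * k - 1 : ℝ) ^ (n - 2)) +
          a n / (2 * k * (2 * k - 1 : ℝ) ^ (n - 1))) with hc
  set g : ℕ → ℝ := fun n : ℕ =>
        (∑ i ∈ Finset.Icc 1 n, a i) / (((k : ℝ) / (k - 1)) * (2 * k - 1) ^ n) with hg
  set C : ℝ := (4 * (k:ℝ) - 4) / (2 * (k:ℝ) - 1) ^ 2 with hCdef
  have h1 : Tendsto (fun n => C * c n) atTop (nhds (C * δ)) := hann.const_mul C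
  have hgnonneg : ∀ n, 0 ≤ g n := by
    intro n
    apply div_nonneg
    · exact Finset.sum_nonneg fun i _ => hnonneg i
    · have : (0:ℝ) < (k:ℝ) / ((k:ℝ) - 1) := by
        apply div_pos <;> linarith
      positivity
  have hbdd : IsBoundedUnder (· ≥ ·) atTop g := isBoundedUnder_of ⟨0, fun n => hgnonneg n⟩
  have hK1' : ((k:ℝ) - 1) ≠ 0 := by linarith
  have hball : ∀ n, ∑ i ∈ Finset.Icc 1 n, a i ≤ ((k:ℝ)/((k:ℝ)-1)) * (2*(k:ℝ)-1) ^ n := by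
    intro n
    induction n with
    | zero =>
      simp only [pow_zero, mul_one]
      rw [show Finset.Icc 1 0 = (∅ : Finset ℕ) from rfl]
      simp only [Finset.sum_empty]
      apply le_of_lt
      apply div_pos <;> linarith
    | succ n ih =>
      rw [Finset.sum_Icc_succ_top (by omega : 1 ≤ n + 1)]
      have hub := hupper (n+1) (by omega)
      simp only [Nat.add_sub_cancel] at hub
      have hqn : (0:ℝ) ≤ (2*(k:ℝ)-1) ^ n := le_of_lt (pow_pos hqpos n)
      have hd : ((k:ℝ)/((k:ℝ)-1)) * ((k:ℝ)-1) = (k:ℝ) := div_mul_cancel₀ _ hK1'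
      have hkey : (((k:ℝ)/((k:ℝ)-1)) * ((k:ℝ)-1)) * (2*(2*(k:ℝ)-1)^n)
          = (k:ℝ) * (2*(2*(k:ℝ)-1)^n) := by rw [hd]
      rw [pow_succ]
      nlinarith [hkey, ih, hub]
  have hgle1 : ∀ n, g n ≤ 1 := by
    intro n
    rw [hg]
    have hpos : (0:ℝ) < ((k:ℝ)/((k:ℝ)-1)) * (2*(k:ℝ)-1) ^ n := by
      have : (0:ℝ) < (k:ℝ) / ((k:ℝ) - 1) := by apply div_pos <;> linarith
      positivity
    exact div_le_one_of_le₀ (hball n) (le_of_lt hpos)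
  have hcob : IsCoboundedUnder (· ≥ ·) atTop g :=
    IsBoundedUnder.isCoboundedUnder_ge (isBoundedUnder_of ⟨1, fun n => hgle1 n⟩)
  have hle : ∀ᶠ n in atTop, C * c n ≤ g n := by
    rw [eventually_atTop]
    refine ⟨2, fun n hn => ?_⟩
    obtain ⟨p, rfl⟩ := le_iff_exists_add.mp hn
    have e1 : 2 + p - 1 = p + 1 := by omega
    have e2 : 2 + p - 2 = p := by omega
    have e3 : 2 + p = p + 2 := by omega
    have e4 : p + 2 - 1 = p + 1 := by omega
    have e5 : p + 2 - 2 = p := by omega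
    simp only [hc, hg, e1, e2, e3, e4, e5]
    have hx : (0:ℝ) < (2*(k:ℝ)-1) ^ p := pow_pos hqpos p
    set q : ℝ := 2*(k:ℝ)-1 with hqdef
    set x : ℝ := q ^ p with hxdef
    have hS : a (p+1) + a (p+2) ≤ ∑ i ∈ Finset.Icc 1 (p+2), a i := by
      have hsub : ({p+1, p+2} : Finset ℕ) ⊆ Finset.Icc 1 (p+2) := by
        intro i hi
        simp only [Finset.mem_insert, Finset.mem_singleton] at hi
        simp only [Finset.mem_Icc]
        omega
      have := Finset.sum_le_sum_of_subset_of_nonneg hsub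
        (fun i _ _ => hnonneg i)
      rwa [Finset.sum_pair (by omega : p+1 ≠ p+2)] at this
    set A := a (p+1)
    set B := a (p+2)
    set S := ∑ i ∈ Finset.Icc 1 (p+2), a i
    have hA : 0 ≤ A := hnonneg _
    have hB : 0 ≤ B := hnonneg _
    have hKne : ((k:ℝ)) ≠ 0 := by linarith
    have hK1 : ((k:ℝ) - 1) ≠ 0 := by linarith
    have hqne : q ≠ 0 := ne_of_gt hqpos
    have hxne : x ≠ 0 := ne_of_gt hx
    have hpow1 : q ^ (p+1) = x * q := by rw [hxdef, pow_succ]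
    have hpow2 : q ^ (p+2) = x * q * q := by rw [hxdef, pow_succ, pow_succ]
    rw [hpow1, hpow2]
    have key : C * (1/2 * (A/(2*(k:ℝ)*x) + B/(2*(k:ℝ)*(x*q)))) =
        (((k:ℝ)-1)*(q*A+B)) / ((k:ℝ)*(x*q*q*q)) := by
      rw [hCdef]
      field_simp
      ring
    have key2 : S / ((k:ℝ)/((k:ℝ)-1)*(x*q*q)) =
        (((k:ℝ)-1)*(q*S)) / ((k:ℝ)*(x*q*q*q)) := by
      field_simp
    rw [key, key2]
    have hnum : q*A + B ≤ q*S := by nlinarith [hS]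
    have hden : (0:ℝ) < (k:ℝ)*(x*q*q*q) :=
      mul_pos (by linarith) (mul_pos (mul_pos (mul_pos hx hqpos) hqpos) hqpos)
    have h2 : ((k:ℝ)-1)*(q*A+B) ≤ ((k:ℝ)-1)*(q*S) :=
      mul_le_mul_of_nonneg_left hnum (by linarith)
    exact (div_le_div_iff_of_pos_right hden).mpr h2
  calc C * δ = liminf (fun n => C * c n) atTop := (h1.liminf_eq).symm
    _ ≤ liminf g atTop := liminf_le_liminf hle h1.isBoundedUnder_ge hcob
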